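/- Construction of a monoid from a monoidal heterogeneous substitution system (MHSS): let V be a monoidal category, H an endofunctor on V with pointed tensorial strength θ, and (t, η, τ) a MHSS for (V, H, θ). Define μ : t ⊗ t → t as the unique morphism {(t,η)}⟦1_t⟧ given by the MHSS property applied to the triple (t, η, 1_t). Then (t, η, μ) is a monoid in V. -/

import Mathlib

open CategoryTheory Category MonoidalCategory

section

variable {V : Type*} [Category V] [MonoidalCategory V]

/-- A pointed tensorial strength for an endofunctor `H` on a monoidal category `V`:
for each monoidal-pointed object `(z, e : I ⟶ z)` and each `x`, a morphism
`θ_{(z,e),x} : z ⊗ H x ⟶ H (z ⊗ x)`, natural in both arguments, satisfying the unitor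
law and the associator-compatibility (tensor) law. -/
structure PointedStrength (H : V ⥤ V) where
  θ : ∀ (z : V), (𝟙_ V ⟶ z) → ∀ x : V, z ⊗ H.obj x ⟶ H.obj (z ⊗ x)
  /-- naturality in the pointed-object argument -/
  nat_pt : ∀ {z z' : V} (e : 𝟙_ V ⟶ z) (e' : 𝟙_ V ⟶ z') (g : z ⟶ z'), e ≫ g = e' →
    ∀ x : V, g ▷ H.obj x ≫ θ z' e' x = θ z e x ≫ H.map (g ▷ x)
  /-- naturality in the second argument -/
  nat_arg : ∀ (z : V) (e : 𝟙_ V ⟶ z) {x x' : V} (f : x ⟶ x'),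
    z ◁ H.map f ≫ θ z e x' = θ z e x ≫ H.map (z ◁ f)
  /-- preservation of the unitor -/
  unit_law : ∀ x : V, θ (𝟙_ V) (𝟙 (𝟙_ V)) x ≫ H.map (λ_ x).hom = (λ_ (H.obj x)).hom
  /-- preservation of the actor (compatibility with the associator and the tensor of
  pointed objects) -/
  tensor_law : ∀ (z : V) (e : 𝟙_ V ⟶ z) (w : V) (e' : 𝟙_ V ⟶ w) (x : V),
    θ (z ⊗ w) ((λ_ (𝟙_ V)).inv ≫ (e ⊗ₘ e')) x ≫ H.map (α_ z w x).hom =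
      (α_ z w (H.obj x)).hom ≫ z ◁ θ w e' x ≫ θ z e (w ⊗ x)

/-- `(t, η, τ)` is a monoidal heterogeneous substitution system (MHSS) for `(V, H, θ)`:
for every `(z, e : I ⟶ z, f : z ⟶ t)` there is a unique `h : z ⊗ t ⟶ t` with
`(1_z ⊗ η) · h = ρ_z · f` and `(1_z ⊗ τ) · h = θ_{(z,e),t} · H h · τ`. -/
def IsMHSS {H : V ⥤ V} (S : PointedStrength H)
    (t : V) (η : 𝟙_ V ⟶ t) (τ : H.obj t ⟶ t) : Prop :=
  ∀ (z : V) (e : 𝟙_ V ⟶ z) (f : z ⟶ t),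
    ∃! h : z ⊗ t ⟶ t,
      z ◁ η ≫ h = (ρ_ z).hom ≫ f ∧
      z ◁ τ ≫ h = S.θ z e t ≫ H.map h ≫ τ

end

section

variable {V : Type*} [Category V] [MonoidalCategory V]

/-- Construction of a monoid from a MHSS: if `(t, η, τ)` is a MHSS for `(V, H, θ)` and
`μ := {(t,η)}⟦1_t⟧` is the unique morphism given by the MHSS property applied to the
triple `(t, η, 1_t)`, then `(t, η, μ)` is a monoid in `V`. -/
theorem monoid_from_mhss {H : V ⥤ V} (S : PointedStrength H)
    (t : V) (η : 𝟙_ V ⟶ t) (τ : H.obj t ⟶ t)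
    (hmhss : IsMHSS S t η τ)
    (μ : t ⊗ t ⟶ t)
    -- `μ` is the unique morphism `{(t,η)}⟦1_t⟧` determined by the MHSS property:
    (hμ₁ : t ◁ η ≫ μ = (ρ_ t).hom ≫ 𝟙 t)
    (hμ₂ : t ◁ τ ≫ μ = S.θ t η t ≫ H.map μ ≫ τ) :
    -- left unit law, right unit law, associativity
    η ▷ t ≫ μ = (λ_ t).hom ∧
    t ◁ η ≫ μ = (ρ_ t).hom ∧
    (α_ t t t).hom ≫ t ◁ μ ≫ μ = μ ▷ t ≫ μ := by
  have hμ₁' : t ◁ η ≫ μ = (ρ_ t).hom := by simpa using hμ₁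
  refine ⟨?_, hμ₁', ?_⟩
  · -- left unit law, via uniqueness at (𝟙, 𝟙, η)
    obtain ⟨h0, -, huniq⟩ := hmhss (𝟙_ V) (𝟙 _) η
    have hA : (λ_ t).hom = h0 := by
      refine huniq _ ⟨?_, ?_⟩
      · rw [leftUnitor_naturality, unitors_equal]
      · rw [leftUnitor_naturality, ← S.unit_law t]; simp
    have hB : η ▷ t ≫ μ = h0 := by
      refine huniq _ ⟨?_, ?_⟩
      · rw [whisker_exchange_assoc, hμ₁', rightUnitor_naturality]
      · rw [whisker_exchange_assoc, hμ₂, reassoc_of% S.nat_pt (𝟙 _) η η (by simp) t]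
        simp
    rw [hB, hA]
  · -- associativity, via uniqueness at (t ⊗ t, e, μ)
    set e : 𝟙_ V ⟶ t ⊗ t := (λ_ (𝟙_ V)).inv ≫ (η ⊗ₘ η) with he
    obtain ⟨h0, -, huniq⟩ := hmhss (t ⊗ t) e μ
    have heμ : e ≫ μ = η := by
      rw [he, assoc, MonoidalCategory.tensorHom_def, assoc, hμ₁', rightUnitor_naturality,
        ← unitors_equal]
      simp
    have hA : (α_ t t t).hom ≫ t ◁ μ ≫ μ = h0 := by
      refine huniq _ ⟨?_, ?_⟩
      · rw [associator_naturality_right_assoc, ← MonoidalCategory.whiskerLeft_comp_assoc, hμ₁']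
        simp
      · rw [associator_naturality_right_assoc, ← MonoidalCategory.whiskerLeft_comp_assoc, hμ₂,
          MonoidalCategory.whiskerLeft_comp, MonoidalCategory.whiskerLeft_comp, assoc, assoc, hμ₂,
          reassoc_of% S.nat_arg t η μ]
        have h3 := S.tensor_law t η t η t
        rw [← he] at h3
        rw [← reassoc_of% h3]
        simp
    have hB : μ ▷ t ≫ μ = h0 := by
      refine huniq _ ⟨?_, ?_⟩
      · rw [whisker_exchange_assoc, hμ₁', rightUnitor_naturality]
      · rw [whisker_exchange_assoc, hμ₂, reassoc_of% S.nat_pt e η μ heμ t]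
        simp
    rw [hA, hB]

end
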